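/- Fix χ ∈ (1/2, 1) and b > 1, and let q = 1 − b^{1/2−χ} ∈ (0,1). With the truncated kernel κ_b((x,s),(y,t)) = κ((x,s),(y,t))·1_{y≤bx}, the function h(x,s) = u_s/√x, where u = (u_Old, u_Young) is the Perron eigenvector of the matrix M_b = [[c_{OldOld}, c_{OldYoung}·q],[c_{YoungOld}, c_{YoungYoung}·q]], is an eigenfunction of the truncated integral operator with eigenvalue ((1+q)c_{OldOld} + √(((1−q)c_{OldOld})² + 4q·c_{OldYoung}·c_{YoungOld}))/(2χ−1). -/

import Mathlib

open MeasureTheory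

/-- Labels of nodes in the Pólya point tree. -/
inductive Label : Type
  | old : Label
  | young : Label
deriving DecidableEq

open Label

/-- The constants `c_{st}` of the Pólya point tree mean-offspring kernel. -/
noncomputable def cst (m : ℕ) (δ : ℝ) : Label → Label → ℝ
  | old, old => m * (m + δ) / (2 * m + δ)
  | old, young => m * (m + 1 + δ) / (2 * m + δ)
  | young, old => (m - 1) * (m + δ) / (2 * m + δ)
  | young, young => m * (m + δ) / (2 * m + δ)

/-- The Pólya point tree mean-offspring kernel. -/
noncomputable def pptKernel (m : ℕ) (δ χ : ℝ) (x : ℝ) (s : Label) (y : ℝ) (t : Label) : ℝ :=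
  cst m δ s t * ((if y < x ∧ t = old then 1 else 0) + (if x < y ∧ t = young then 1 else 0)) /
    (max x y ^ χ * min x y ^ (1 - χ))

lemma integral_Ioo_rpow_low (p : ℝ) (hp : -1 < p) (x : ℝ) (hx : 0 < x) :
    ∫ y in Set.Ioo (0:ℝ) x, y ^ p = x ^ (p+1) / (p+1) := by
  rw [← integral_Ioc_eq_integral_Ioo, ← intervalIntegral.integral_of_le hx.le,
    integral_rpow (Or.inl hp), Real.zero_rpow (by linarith), sub_zero]

lemma integral_Ioo_rpow_high (p : ℝ) (hp : p ≠ -1) {x z : ℝ} (hx : 0 < x) (hxz : x < z) :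
    ∫ y in Set.Ioo x z, y ^ p = (z ^ (p+1) - x ^ (p+1)) / (p+1) := by
  rw [← integral_Ioc_eq_integral_Ioo, ← intervalIntegral.integral_of_le hxz.le,
    integral_rpow (Or.inr ⟨hp, by rw [Set.uIcc_of_le hxz.le]; exact fun h => absurd h.1 (by linarith)⟩)]

/-- With `χ = (m+δ)/(2m+δ) ∈ (1/2,1)`, `b > 1`, `q = 1-b^{1/2-χ}`, and `u` the Perron
eigenvector of `M_b = [[c_oo, c_oy q],[c_yo, c_yy q]]` (with eigenvalue
`λ_{M_b} = ((1+q)c_oo + √(((1-q)c_oo)² + 4q c_oy c_yo))/2`), the function `h(x,s) = u_s/√x`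
is an eigenfunction of the truncated operator `(T_{κ_b}f)(x,s) = ∑_t ∫₀^{bx} κ f dy` with
eigenvalue `r = ((1+q)c_oo + √(((1-q)c_oo)² + 4q c_oy c_yo))/(2χ-1)`. -/
theorem truncated_ppt_operator_eigenfunction (m : ℕ) (hm : 1 ≤ m) (δ : ℝ) (hδ : 0 < δ)
    (χ : ℝ) (hχ : χ = ((m:ℝ) + δ) / (2 * m + δ)) (b : ℝ) (hb : 1 < b)
    (q : ℝ) (hq : q = 1 - b ^ (1/2 - χ))
    (r : ℝ)
    (hr : r = ((1 + q) * cst m δ old old +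
        Real.sqrt (((1 - q) * cst m δ old old) ^ 2 +
          4 * q * cst m δ old young * cst m δ young old)) / (2 * χ - 1))
    (u : Label → ℝ) (hu : ∀ s, 0 < u s)
    (heig : ∀ s, cst m δ s old * u old + cst m δ s young * q * u young
        = (2 * χ - 1) * r / 2 * u s) :
    ∀ x : ℝ, 0 < x → ∀ s : Label,
      (∫ y in Set.Ioo (0:ℝ) (b * x), pptKernel m δ χ x s y old * (u old / Real.sqrt y)) +
        (∫ y in Set.Ioo (0:ℝ) (b * x), pptKernel m δ χ x s y young * (u young / Real.sqrt y))
      = r * (u s / Real.sqrt x) := by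
  have hm' : (1:ℝ) ≤ m := by exact_mod_cast hm
  have hd : (0:ℝ) < 2*m + δ := by linarith
  have hχl : 1/2 < χ := by rw [hχ, lt_div_iff₀ hd]; linarith
  have hχu : χ < 1 := by rw [hχ, div_lt_one hd]; linarith
  have hne : (χ - 1/2:ℝ) ≠ 0 := by linarith
  intro x hx s
  have hbx : x < b * x := by nlinarith
  have hbx0 : (0:ℝ) < b * x := by linarith
  have hsx : (0:ℝ) < Real.sqrt x := Real.sqrt_pos.2 hx
  have hold : (∫ y in Set.Ioo (0:ℝ) (b * x), pptKernel m δ χ x s y old * (u old / Real.sqrt y))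
      = cst m δ s old * u old / ((χ - 1/2) * Real.sqrt x) := by
    have h1 : Set.EqOn (fun y => pptKernel m δ χ x s y old * (u old / Real.sqrt y))
        ((Set.Ioo (0:ℝ) x).indicator
          (fun y => cst m δ s old * u old * x ^ (-χ) * y ^ (χ - 3/2)))
        (Set.Ioo (0:ℝ) (b*x)) := by
      intro y hy
      obtain ⟨hy0, _⟩ := hy
      by_cases hyx : y < x
      · rw [Set.indicator_of_mem (Set.mem_Ioo.mpr ⟨hy0, hyx⟩)]
        have hxχ : (0:ℝ) < x ^ χ := Real.rpow_pos_of_pos hx _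
        have hyχ : (0:ℝ) < y ^ (1-χ:ℝ) := Real.rpow_pos_of_pos hy0 _
        have hsy : (0:ℝ) < Real.sqrt y := Real.sqrt_pos.2 hy0
        have e1 : (χ - 3/2 : ℝ) = (-(1-χ)) + (-(1/2)) := by ring
        simp only [pptKernel, hyx, max_eq_left hyx.le, min_eq_right hyx.le,
          not_lt.2 hyx.le, true_and, false_and, if_true, if_false, and_true, add_zero,
          e1, Real.rpow_add hy0, Real.rpow_neg hy0.le, Real.rpow_neg hx.le,
          ← Real.sqrt_eq_rpow]
        field_simp
      · rw [Set.indicator_of_notMem (fun h => hyx (Set.mem_Ioo.mp h).2)]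
        simp [pptKernel, hyx]
    rw [setIntegral_congr_fun measurableSet_Ioo h1, setIntegral_indicator measurableSet_Ioo,
      Set.inter_eq_right.mpr (Set.Ioo_subset_Ioo le_rfl hbx.le),
      integral_const_mul, integral_Ioo_rpow_low _ (by linarith) _ hx]
    have hxpow : x ^ (-χ:ℝ) * x ^ (χ - 1/2 : ℝ) = (Real.sqrt x)⁻¹ := by
      rw [← Real.rpow_add hx, Real.sqrt_eq_rpow, ← Real.rpow_neg hx.le]
      congr 1; ring
    rw [show (χ - 3/2 + 1 : ℝ) = χ - 1/2 by ring,
      show cst m δ s old * u old * x ^ (-χ:ℝ) * (x ^ (χ - 1/2 : ℝ) / (χ - 1/2))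
        = cst m δ s old * u old * (x ^ (-χ:ℝ) * x ^ (χ - 1/2 : ℝ)) / (χ - 1/2) from by ring,
      hxpow, ← div_eq_mul_inv, div_div, mul_comm (Real.sqrt x)]
  have hyoung : (∫ y in Set.Ioo (0:ℝ) (b * x), pptKernel m δ χ x s y young * (u young / Real.sqrt y))
      = cst m δ s young * q * u young / ((χ - 1/2) * Real.sqrt x) := by
    have h1 : Set.EqOn (fun y => pptKernel m δ χ x s y young * (u young / Real.sqrt y))
        ((Set.Ioo x (b*x)).indicator
          (fun y => cst m δ s young * u young * x ^ (χ-1) * y ^ (-χ - 1/2)))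
        (Set.Ioo (0:ℝ) (b*x)) := by
      intro y hy
      obtain ⟨hy0, hyb⟩ := hy
      by_cases hxy : x < y
      · rw [Set.indicator_of_mem (Set.mem_Ioo.mpr ⟨hxy, hyb⟩)]
        have hxχ : (0:ℝ) < x ^ (1-χ:ℝ) := Real.rpow_pos_of_pos hx _
        have hyχ : (0:ℝ) < y ^ (χ:ℝ) := Real.rpow_pos_of_pos hy0 _
        have hsy : (0:ℝ) < Real.sqrt y := Real.sqrt_pos.2 hy0
        have e1 : (-χ - 1/2 : ℝ) = (-χ) + (-(1/2)) := by ring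
        have e2 : (χ - 1 : ℝ) = -(1-χ) := by ring
        simp only [pptKernel, hxy, max_eq_right hxy.le, min_eq_left hxy.le,
          not_lt.2 hxy.le, true_and, false_and, and_true, and_false, if_true, if_false,
          zero_add, e1, e2, Real.rpow_add hy0, Real.rpow_neg hy0.le, Real.rpow_neg hx.le,
          ← Real.sqrt_eq_rpow]
        field_simp
      · rw [Set.indicator_of_notMem (fun h => hxy (Set.mem_Ioo.mp h).1)]
        simp [pptKernel, hxy]
    rw [setIntegral_congr_fun measurableSet_Ioo h1, setIntegral_indicator measurableSet_Ioo,
      Set.inter_eq_right.mpr (Set.Ioo_subset_Ioo hx.le le_rfl),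
      integral_const_mul, integral_Ioo_rpow_high _ (by intro h; linarith) hx hbx]
    have hb0 : (0:ℝ) < b := by linarith
    have hxpow : x ^ (χ-1:ℝ) * x ^ (1/2 - χ : ℝ) = (Real.sqrt x)⁻¹ := by
      rw [← Real.rpow_add hx, Real.sqrt_eq_rpow, ← Real.rpow_neg hx.le]
      congr 1; ring
    rw [show (-χ - 1/2 + 1 : ℝ) = 1/2 - χ by ring, Real.mul_rpow hb0.le hx.le, hq]
    have hne' : (1/2 - χ : ℝ) ≠ 0 := by intro h; linarith
    have e : cst m δ s young * u young * x ^ (χ-1:ℝ) *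
          ((b ^ (1/2-χ:ℝ) * x ^ (1/2-χ:ℝ) - x ^ (1/2-χ:ℝ)) / (1/2 - χ))
        = cst m δ s young * (1 - b ^ (1/2-χ:ℝ)) * u young *
            (x ^ (χ-1:ℝ) * x ^ (1/2-χ:ℝ)) / (χ - 1/2) := by
      rw [← mul_div_assoc, div_eq_div_iff hne' hne]
      ring
    rw [e, hxpow, ← div_eq_mul_inv, div_div, mul_comm (Real.sqrt x)]
  rw [hold, hyoung]
  rw [← add_div, heig s, mul_div_assoc',
    div_eq_div_iff (mul_ne_zero hne hsx.ne') hsx.ne']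
  ring
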